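/- Let W = {(W_i, ω_i)}_{i∈I} and W¹ = {(W_i, 1)}_{i∈I}. If W is a fusion frame and W¹ is a fusion frame, then e(W) = e(W¹); i.e., the excess of a fusion frame does not depend on the weights. -/

import Mathlib

set_option maxHeartbeats 1000000

noncomputable section
open scoped ENNReal

/-- `W = {(W i, ω i)}` is a fusion frame for `H`. -/
def IsFusionFrame {H : Type} [NormedAddCommGroup H] [InnerProductSpace ℂ H]
    {ι : Type} (W : ι → Submodule ℂ H) [∀ i, Submodule.HasOrthogonalProjection (W i)]
    (ω : ι → ℝ) : Prop :=
  (∀ i, 0 < ω i) ∧ ∃ A B : ℝ, 0 < A ∧ A ≤ B ∧ ∀ f : H,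
    (A * ‖f‖ ^ 2 ≤ ∑' i, ω i ^ 2 * ‖(Submodule.orthogonalProjection (W i) f : H)‖ ^ 2) ∧
    (∑' i, ω i ^ 2 * ‖(Submodule.orthogonalProjection (W i) f : H)‖ ^ 2 ≤ B * ‖f‖ ^ 2)

/-- `W = {(W i, ω i)}` is a fusion Riesz basis for `H`. -/
def IsFusionRieszBasis {H : Type} [NormedAddCommGroup H] [InnerProductSpace ℂ H]
    {ι : Type} (W : ι → Submodule ℂ H) (ω : ι → ℝ) : Prop :=
  (∀ i, 0 < ω i) ∧ (⨆ i, W i).topologicalClosure = ⊤ ∧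
  ∃ C D : ℝ, 0 < C ∧ C ≤ D ∧ ∀ (s : Finset ι) (f : ∀ i, W i),
    (C * ∑ j ∈ s, ‖(f j : H)‖ ^ 2 ≤ ‖∑ j ∈ s, ω j • (f j : H)‖ ^ 2) ∧
    (‖∑ j ∈ s, ω j • (f j : H)‖ ^ 2 ≤ D * ∑ j ∈ s, ‖(f j : H)‖ ^ 2)

section Aux

variable {H : Type} [NormedAddCommGroup H] [InnerProductSpace ℂ H]
  {ι : Type} (W : ι → Submodule ℂ H) [∀ i, CompleteSpace (W i)]

/-- The diagonal multiplication operator on the Hilbert sum, as a linear map. -/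
def diagMemℓp (c : ι → ℂ) {C : ℝ} (hC : 0 ≤ C)
    (hbd : ∀ i (x : ↥(W i)), ‖c i • x‖ ≤ C * ‖x‖)
    (g : lp (fun i => ↥(W i)) 2) : Memℓp (fun i => c i • g i) 2 := by
  apply memℓp_gen
  have ht : (0:ℝ) < (2:ℝ≥0∞).toReal := by norm_num
  have h := ((lp.memℓp g).summable ht).mul_left (C ^ (2:ℝ≥0∞).toReal)
  refine Summable.of_nonneg_of_le (fun i => Real.rpow_nonneg (norm_nonneg _) _)
    (fun i => ?_) h
  calc ‖c i • g i‖ ^ (2:ℝ≥0∞).toReal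
      ≤ (C * ‖g i‖) ^ (2:ℝ≥0∞).toReal :=
        Real.rpow_le_rpow (norm_nonneg _) (hbd i (g i)) ht.le
    _ = C ^ (2:ℝ≥0∞).toReal * ‖g i‖ ^ (2:ℝ≥0∞).toReal :=
        Real.mul_rpow hC (norm_nonneg _)

/-- The diagonal multiplication operator on the Hilbert sum. -/
def diagOp (c : ι → ℂ) {C : ℝ} (hC : 0 ≤ C)
    (hbd : ∀ i (x : ↥(W i)), ‖c i • x‖ ≤ C * ‖x‖) :
    lp (fun i => ↥(W i)) 2 →L[ℂ] lp (fun i => ↥(W i)) 2 :=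
  LinearMap.mkContinuous
    { toFun := fun g => ⟨fun i => c i • g i, diagMemℓp W c hC hbd g⟩
      map_add' := fun g h => by
        apply lp.ext
        funext i
        show c i • (g + h) i = c i • g i + c i • h i
        rw [lp.coeFn_add]
        simp [smul_add]
      map_smul' := fun a g => by
        apply lp.ext
        funext i
        show c i • (a • g) i = a • (c i • g i)
        rw [lp.coeFn_smul, Pi.smul_apply]
        exact smul_comm _ _ _ }
    C
    (by
      intro g
      have ht : (0:ℝ) < (2:ℝ≥0∞).toReal := by norm_num
      refine lp.norm_le_of_tsum_le ht (by positivity) ?_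
      have hsum1 : Summable fun i => ‖c i • g i‖ ^ (2:ℝ≥0∞).toReal :=
        (diagMemℓp W c hC hbd g).summable ht
      have hsum2 := ((lp.memℓp g).summable ht).mul_left (C ^ (2:ℝ≥0∞).toReal)
      calc (∑' i, ‖c i • g i‖ ^ (2:ℝ≥0∞).toReal)
          ≤ ∑' i, C ^ (2:ℝ≥0∞).toReal * ‖g i‖ ^ (2:ℝ≥0∞).toReal := by
            refine Summable.tsum_le_tsum (fun i => ?_) hsum1 hsum2
            calc ‖c i • g i‖ ^ (2:ℝ≥0∞).toReal
                ≤ (C * ‖g i‖) ^ (2:ℝ≥0∞).toReal :=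
                  Real.rpow_le_rpow (norm_nonneg _) (hbd i (g i)) ht.le
              _ = C ^ (2:ℝ≥0∞).toReal * ‖g i‖ ^ (2:ℝ≥0∞).toReal :=
                  Real.mul_rpow hC (norm_nonneg _)
        _ = C ^ (2:ℝ≥0∞).toReal * ∑' i, ‖g i‖ ^ (2:ℝ≥0∞).toReal := tsum_mul_left
        _ = C ^ (2:ℝ≥0∞).toReal * ‖g‖ ^ (2:ℝ≥0∞).toReal := by
            rw [lp.norm_rpow_eq_tsum ht]
        _ = (C * ‖g‖) ^ (2:ℝ≥0∞).toReal := (Real.mul_rpow hC (norm_nonneg _)).symm)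

@[simp]
theorem diagOp_apply (c : ι → ℂ) {C : ℝ} (hC : 0 ≤ C)
    (hbd : ∀ i (x : ↥(W i)), ‖c i • x‖ ≤ C * ‖x‖)
    (g : lp (fun i => ↥(W i)) 2) (i : ι) :
    (diagOp W c hC hbd g) i = c i • g i := rfl

end Aux

/-- the excess of a fusion frame does not depend on the weights. -/
theorem excess_independent_of_weights
    {H : Type} [NormedAddCommGroup H] [InnerProductSpace ℂ H] [CompleteSpace H]
    {ι : Type} (W : ι → Submodule ℂ H) [∀ i, CompleteSpace (W i)] (ω : ι → ℝ)
    (hW : IsFusionFrame W ω)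
    (hW1 : IsFusionFrame W (fun _ => (1 : ℝ)))
    -- synthesis operator of `W = {(W i, ω i)}`:
    (T : lp (fun i => ↥(W i)) 2 →L[ℂ] H)
    (hT : ∀ g : lp (fun i => ↥(W i)) 2, T g = ∑' i, ω i • ((g i : H)))
    -- synthesis operator of `W¹ = {(W i, 1)}`:
    (T1 : lp (fun i => ↥(W i)) 2 →L[ℂ] H)
    (hT1 : ∀ g : lp (fun i => ↥(W i)) 2, T1 g = ∑' i, ((g i : H))) :
    Module.rank ℂ (LinearMap.ker (T : lp (fun i => ↥(W i)) 2 →ₗ[ℂ] H)) =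
      Module.rank ℂ (LinearMap.ker (T1 : lp (fun i => ↥(W i)) 2 →ₗ[ℂ] H)) := by
  classical
  obtain ⟨hω, A, B, hA, hAB, hfr⟩ := hW
  obtain ⟨-, A1, B1, hA1, hA1B, hfr1⟩ := hW1
  have hB : (0:ℝ) < B := lt_of_lt_of_le hA hAB
  -- summability of the frame series
  have hsummW : ∀ f : H,
      Summable fun i => ω i ^ 2 * ‖(Submodule.orthogonalProjection (W i) f : H)‖ ^ 2 := by
    intro f
    by_contra hns
    have h0 := tsum_eq_zero_of_not_summable hns
    have hlow := (hfr f).1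
    rw [h0] at hlow
    have hf0 : f = 0 := by
      have : ‖f‖ ^ 2 ≤ 0 := by nlinarith
      have : ‖f‖ = 0 := by nlinarith [sq_nonneg ‖f‖, norm_nonneg f]
      simpa [norm_eq_zero] using this
    subst hf0
    apply hns
    simpa using summable_zero
  have hsummW1 : ∀ f : H,
      Summable fun i => ‖(Submodule.orthogonalProjection (W i) f : H)‖ ^ 2 := by
    intro f
    by_contra hns
    have hns' : ¬ Summable fun i =>
        (fun _ : ι => (1:ℝ)) i ^ 2 * ‖(Submodule.orthogonalProjection (W i) f : H)‖ ^ 2 := by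
      simpa using hns
    have h0 := tsum_eq_zero_of_not_summable hns'
    have hlow := (hfr1 f).1
    rw [h0] at hlow
    have hf0 : f = 0 := by
      have : ‖f‖ ^ 2 ≤ 0 := by nlinarith
      have : ‖f‖ = 0 := by nlinarith [sq_nonneg ‖f‖, norm_nonneg f]
      simpa [norm_eq_zero] using this
    subst hf0
    apply hns
    simpa using summable_zero
  -- the diagonal operator
  set c : ι → ℂ := fun i => ((ω i : ℝ) : ℂ) with hc
  have hCpos : (0:ℝ) ≤ Real.sqrt B := Real.sqrt_nonneg B
  have hbd : ∀ i (x : ↥(W i)), ‖c i • x‖ ≤ Real.sqrt B * ‖x‖ := by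
    intro i x
    rcases eq_or_ne x 0 with rfl | hx
    · simp
    · have hxH : ((x : H)) ≠ 0 := by
        simpa [ZeroMemClass.coe_eq_zero] using hx
      have hxpos : 0 < ‖(x:H)‖ := norm_pos_iff.2 hxH
      have hproj : (Submodule.orthogonalProjection (W i) (x:H) : H) = (x:H) :=
        congrArg Subtype.val (Submodule.orthogonalProjectionOnto_mem_subspace_eq_self x)
      have hterm : ω i ^ 2 * ‖(Submodule.orthogonalProjection (W i) (x:H) : H)‖ ^ 2 ≤
          ∑' j, ω j ^ 2 * ‖(Submodule.orthogonalProjection (W j) (x:H) : H)‖ ^ 2 :=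
        Summable.le_tsum (hsummW (x:H)) i (fun j _ => by positivity)
      have hupper := (hfr (x:H)).2
      have hsq : ω i ^ 2 ≤ B := by
        rw [hproj] at hterm
        have h2 : ω i ^ 2 * ‖(x:H)‖ ^ 2 ≤ B * ‖(x:H)‖ ^ 2 := le_trans hterm hupper
        have h3 : (0:ℝ) < ‖(x:H)‖ ^ 2 := by positivity
        exact le_of_mul_le_mul_right (by linarith [h2]) h3
      have hωle : ω i ≤ Real.sqrt B := by
        have := Real.sqrt_le_sqrt hsq
        rwa [Real.sqrt_sq (hω i).le] at this
      have hnx : ‖x‖ = ‖(x:H)‖ := rfl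
      calc ‖c i • x‖ = ‖c i‖ * ‖x‖ := norm_smul _ _
        _ = |ω i| * ‖x‖ := by rw [hc]; simp [Complex.norm_real]
        _ = ω i * ‖x‖ := by rw [abs_of_pos (hω i)]
        _ ≤ Real.sqrt B * ‖x‖ := by
            apply mul_le_mul_of_nonneg_right hωle (norm_nonneg _)
  set D : lp (fun i => ↥(W i)) 2 →L[ℂ] lp (fun i => ↥(W i)) 2 :=
    diagOp W c hCpos hbd with hD
  have hDapply : ∀ g i, (D g) i = c i • g i := fun g i => rfl
  -- coordinates in H
  have hDcoe : ∀ (g : lp (fun i => ↥(W i)) 2) (i : ι),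
      (((D g) i : H)) = ω i • ((g i : H)) := by
    intro g i
    rw [hDapply, Submodule.coe_smul]
    exact algebraMap_smul ℂ (ω i) ((g i : H))
  -- T factors through the diagonal operator
  have hTD : T = T1.comp D := by
    ext g
    rw [ContinuousLinearMap.comp_apply, hT, hT1 (D g)]
    exact tsum_congr fun i => (hDcoe g i).symm
  -- D is injective
  have hDinj : Function.Injective D := by
    intro g h hgh
    apply lp.ext
    funext i
    have hcoord : (D g) i = (D h) i := by rw [hgh]
    rw [hDapply, hDapply] at hcoord
    have hc0 : c i ≠ 0 := by
      rw [hc]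
      simpa using (hω i).ne'
    exact smul_right_injective (↥(W i)) hc0 hcoord
  -- conversion between rpow and pow
  have hpow : ∀ x : ℝ, x ^ (2:ℝ≥0∞).toReal = x ^ 2 := by
    intro x
    rw [ENNReal.toReal_ofNat, show ((2:ℝ)) = ((2:ℕ):ℝ) by norm_num, Real.rpow_natCast]
  -- the analysis operator of W¹
  have hEfmem : ∀ f : H, Memℓp (fun i => Submodule.orthogonalProjection (W i) f) 2 := by
    intro f
    apply memℓp_gen
    have := hsummW1 f
    refine this.congr fun i => ?_
    rw [hpow]
    rfl
  haveI : Fact ((1:ℝ≥0∞) ≤ 2) := ⟨by norm_num⟩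
  set Ef : H → lp (fun i => ↥(W i)) 2 :=
    fun f => ⟨fun i => Submodule.orthogonalProjection (W i) f, hEfmem f⟩ with hEf
  have hEfapply : ∀ f i, (Ef f) i = Submodule.orthogonalProjection (W i) f := fun f i => rfl
  -- coordinatewise summability of the synthesis operator
  have hsumcoord : ∀ h : lp (fun i => ↥(W i)) 2,
      HasSum (fun i => ((h i : H))) (T1 h) := by
    intro h
    have h1 := lp.hasSum_single (by norm_num : (2:ℝ≥0∞) ≠ ⊤) h
    have h2 := T1.hasSum h1
    refine HasSum.congr_fun h2 fun i => ?_
    rw [hT1 (lp.single 2 i (h i))]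
    rw [tsum_eq_single i]
    · rw [lp.single_apply_self]
    · intro j hj
      rw [lp.single_apply_ne 2 i _ hj]
      simp
  -- the adjoint of T1 is the analysis operator
  have hadj1 : ∀ f : H, ContinuousLinearMap.adjoint T1 f = Ef f := by
    intro f
    apply ext_inner_left ℂ
    intro h
    rw [ContinuousLinearMap.adjoint_inner_right]
    have h5 : HasSum (fun i => (inner ℂ ((h i : H)) f : ℂ)) (inner ℂ (T1 h) f : ℂ) := by
      have h4 := ((innerSL ℂ f).hasSum (hsumcoord h)).star
      simp only [innerSL_apply_apply, ← starRingEnd_apply, inner_conj_symm] at h4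
      exact h4
    rw [← h5.tsum_eq, lp.inner_eq_tsum]
    refine tsum_congr fun i => ?_
    rw [hEfapply]
    exact (Submodule.inner_orthogonalProjectionOnto_eq_of_mem_left (h i) f).symm
  -- D is self-adjoint
  have hDsa : ContinuousLinearMap.adjoint D = D := by
    refine ((ContinuousLinearMap.eq_adjoint_iff D D).2 fun g h => ?_).symm
    rw [lp.inner_eq_tsum, lp.inner_eq_tsum]
    refine tsum_congr fun i => ?_
    rw [hDapply, hDapply, inner_smul_left, inner_smul_right, hc]
    simp [Complex.conj_ofReal]
  -- the adjoint of T
  have hTadj : ContinuousLinearMap.adjoint T = D.comp (ContinuousLinearMap.adjoint T1) := by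
    rw [hTD, ContinuousLinearMap.adjoint_comp, hDsa]
  -- the adjoint of T is bounded below
  have hTlowsq : ∀ f : H, A * ‖f‖ ^ 2 ≤ ‖ContinuousLinearMap.adjoint T f‖ ^ 2 := by
    intro f
    have hnorm : ‖ContinuousLinearMap.adjoint T f‖ ^ (2:ℝ≥0∞).toReal =
        ∑' i, ‖(ContinuousLinearMap.adjoint T f) i‖ ^ (2:ℝ≥0∞).toReal :=
      lp.norm_rpow_eq_tsum (by norm_num) _
    have hcoord : ∀ i, ‖(ContinuousLinearMap.adjoint T f) i‖ ^ 2 =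
        ω i ^ 2 * ‖(Submodule.orthogonalProjection (W i) f : H)‖ ^ 2 := by
      intro i
      rw [hTadj, ContinuousLinearMap.comp_apply, hadj1, hDapply, hEfapply]
      rw [norm_smul, hc]
      have hni : ‖((ω i : ℝ) : ℂ)‖ = ω i := by
        simp [Complex.norm_real, abs_of_pos (hω i)]
      rw [hni, mul_pow]
      rfl
    calc A * ‖f‖ ^ 2 ≤ ∑' i, ω i ^ 2 * ‖(Submodule.orthogonalProjection (W i) f : H)‖ ^ 2 := (hfr f).1
      _ = ∑' i, ‖(ContinuousLinearMap.adjoint T f) i‖ ^ 2 := by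
          exact tsum_congr fun i => (hcoord i).symm
      _ = ‖ContinuousLinearMap.adjoint T f‖ ^ 2 := by
          rw [← hpow ‖ContinuousLinearMap.adjoint T f‖, hnorm]
          exact tsum_congr fun i => (hpow _).symm
  have hsA : (0:ℝ) < Real.sqrt A := Real.sqrt_pos.2 hA
  have hTlow : ∀ f : H, ‖f‖ ≤ ((⟨(Real.sqrt A)⁻¹, by positivity⟩ : NNReal) : ℝ) *
      ‖ContinuousLinearMap.adjoint T f‖ := by
    intro f
    have h1 := hTlowsq f
    have h2 : Real.sqrt A * ‖f‖ ≤ ‖ContinuousLinearMap.adjoint T f‖ := by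
      nlinarith [Real.sq_sqrt hA.le, norm_nonneg (ContinuousLinearMap.adjoint T f),
        norm_nonneg f, mul_nonneg hsA.le (norm_nonneg f)]
    have := mul_le_mul_of_nonneg_left h2 (by positivity : (0:ℝ) ≤ (Real.sqrt A)⁻¹)
    rw [← mul_assoc, inv_mul_cancel₀ hsA.ne', one_mul] at this
    exact this
  have hanti := (ContinuousLinearMap.adjoint T).antilipschitz_of_bound hTlow
  have hclosedrange : IsClosed (Set.range (ContinuousLinearMap.adjoint T)) :=
    hanti.isClosed_range (ContinuousLinearMap.adjoint T).uniformContinuous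
  -- ker T = (range T†)ᗮ
  have hker : LinearMap.ker (T : lp (fun i => ↥(W i)) 2 →ₗ[ℂ] H) = (LinearMap.range (ContinuousLinearMap.adjoint T : H →ₗ[ℂ] lp (fun i => ↥(W i)) 2))ᗮ := by
    ext g
    rw [LinearMap.mem_ker, Submodule.mem_orthogonal]
    constructor
    · rintro hg u ⟨f, rfl⟩
      simp only [ContinuousLinearMap.coe_coe] at hg ⊢
      rw [ContinuousLinearMap.adjoint_inner_left, hg, inner_zero_right]
    · intro hg
      have := hg (ContinuousLinearMap.adjoint T (T g)) ⟨T g, rfl⟩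
      rw [ContinuousLinearMap.adjoint_inner_left] at this
      exact inner_self_eq_zero.1 this
  have horth : (LinearMap.ker (T : lp (fun i => ↥(W i)) 2 →ₗ[ℂ] H))ᗮ = LinearMap.range (ContinuousLinearMap.adjoint T : H →ₗ[ℂ] lp (fun i => ↥(W i)) 2) := by
    rw [hker, Submodule.orthogonal_orthogonal_eq_closure]
    apply IsClosed.submodule_topologicalClosure_eq
    rw [LinearMap.coe_range]
    exact hclosedrange
  -- range T1† ⊆ (ker T1)ᗮ
  have hrange1 : ∀ f : H, ContinuousLinearMap.adjoint T1 f ∈ (LinearMap.ker (T1 : lp (fun i => ↥(W i)) 2 →ₗ[ℂ] H))ᗮ := by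
    intro f
    rw [Submodule.mem_orthogonal]
    intro u hu
    rw [ContinuousLinearMap.adjoint_inner_right, show T1 u = 0 from LinearMap.mem_ker.1 hu, inner_zero_left]
  -- the two injections
  haveI hkerclosed : CompleteSpace ↥(LinearMap.ker (T : lp (fun i => ↥(W i)) 2 →ₗ[ℂ] H)) :=
    (ContinuousLinearMap.isClosed_ker T).completeSpace_coe
  have hmapsto : ∀ g ∈ LinearMap.ker (T : lp (fun i => ↥(W i)) 2 →ₗ[ℂ] H), D g ∈ LinearMap.ker (T1 : lp (fun i => ↥(W i)) 2 →ₗ[ℂ] H) := by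
    intro g hg
    rw [LinearMap.mem_ker]
    have : T g = 0 := LinearMap.mem_ker.1 hg
    rw [hTD, ContinuousLinearMap.comp_apply] at this
    exact this
  set Φ : ↥(LinearMap.ker (T : lp (fun i => ↥(W i)) 2 →ₗ[ℂ] H)) →ₗ[ℂ] ↥(LinearMap.ker (T1 : lp (fun i => ↥(W i)) 2 →ₗ[ℂ] H)) :=
    (D : lp (fun i => ↥(W i)) 2 →ₗ[ℂ] lp (fun i => ↥(W i)) 2).restrict hmapsto with hΦ
  have hΦinj : Function.Injective Φ := by
    intro x y hxy
    have : D (x : lp (fun i => ↥(W i)) 2) = D (y : lp (fun i => ↥(W i)) 2) :=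
      congrArg Subtype.val hxy
    exact Subtype.ext (hDinj this)
  set Ψ : ↥(LinearMap.ker (T1 : lp (fun i => ↥(W i)) 2 →ₗ[ℂ] H)) →ₗ[ℂ] ↥(LinearMap.ker (T : lp (fun i => ↥(W i)) 2 →ₗ[ℂ] H)) :=
    ((Submodule.orthogonalProjection (LinearMap.ker (T : lp (fun i => ↥(W i)) 2 →ₗ[ℂ] H))).toLinearMap).comp
      ((D : lp (fun i => ↥(W i)) 2 →ₗ[ℂ] lp (fun i => ↥(W i)) 2).domRestrict
        (LinearMap.ker (T1 : lp (fun i => ↥(W i)) 2 →ₗ[ℂ] H))) with hΨ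
  have hΨinj : Function.Injective Ψ := by
    rw [← LinearMap.ker_eq_bot]
    rw [eq_bot_iff]
    rintro x hx
    rw [LinearMap.mem_ker] at hx
    have hx' : Submodule.orthogonalProjection (LinearMap.ker (T : lp (fun i => ↥(W i)) 2 →ₗ[ℂ] H)) (D (x : lp (fun i => ↥(W i)) 2)) = 0 := hx
    have hmem : D (x : lp (fun i => ↥(W i)) 2) ∈ (LinearMap.ker (T : lp (fun i => ↥(W i)) 2 →ₗ[ℂ] H))ᗮ :=
      Submodule.orthogonalProjectionOnto_eq_zero_iff.1 hx'
    rw [horth] at hmem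
    obtain ⟨f, hf⟩ := hmem
    rw [hTadj, ContinuousLinearMap.coe_coe, ContinuousLinearMap.comp_apply] at hf
    have hxval : ContinuousLinearMap.adjoint T1 f = (x : lp (fun i => ↥(W i)) 2) := hDinj hf
    have hxorth : (x : lp (fun i => ↥(W i)) 2) ∈ (LinearMap.ker (T1 : lp (fun i => ↥(W i)) 2 →ₗ[ℂ] H))ᗮ := hxval ▸ hrange1 f
    have hx0 : (x : lp (fun i => ↥(W i)) 2) = 0 := by
      have := (Submodule.orthogonal_disjoint (LinearMap.ker (T1 : lp (fun i => ↥(W i)) 2 →ₗ[ℂ] H))).le_bot ⟨x.2, hxorth⟩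
      simpa using this
    rw [Submodule.mem_bot, Subtype.ext_iff]
    simpa using hx0
  exact le_antisymm (LinearMap.rank_le_of_injective Φ hΦinj)
    (LinearMap.rank_le_of_injective Ψ hΨinj)
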